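/- LP value under collapsing equal-neighborhood vertices: Let G be a finite graph with self-loops, and suppose u ≠ v satisfy N_u = N_v and Δ_u ≥ Δ_v (so v has the larger mean). Then the LP c*(Δ, G) = min{⟨x, Δ⟩ : x ≥ 0, Σ_{j∈N_i} x_j ≥ 1/Δ_i² for all suboptimal i} has the same value as the LP obtained by (a) deleting the constraint of u (it is implied by that of v, being weaker), and (b) restricting to solutions with x_u = 0 (any feasible x can be modified by moving the mass of x_u onto x_v without increasing the objective or violating constraints). -/

import Mathlib

/-- LP value under collapsing equal-neighborhood vertices.  Let `G` have
self-loops with closed neighborhoods `N i` (symmetric), gaps `Δ`, and suppose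
`u ≠ v` satisfy `N u = N v` and `Δ u ≥ Δ v`.  Then the LP
`min {⟨x,Δ⟩ : x ≥ 0, ∑_{j ∈ N i} x j ≥ 1/Δ i² for all suboptimal i}` has the
same value as the LP obtained by dropping the constraint of `u` and restricting
to solutions with `x u = 0`. -/
theorem lp_collapse_equal_neighborhoods (K : ℕ) (N : Fin K → Finset (Fin K))
    (hself : ∀ i, i ∈ N i) (hsymm : ∀ i j, i ∈ N j ↔ j ∈ N i)
    (Δ : Fin K → ℝ) (hΔ : ∀ i, 0 ≤ Δ i)
    (u v : Fin K) (huv : u ≠ v) (hN : N u = N v) (hge : Δ v ≤ Δ u) :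
    sInf {c : ℝ | ∃ x : Fin K → ℝ,
        (∀ i, 0 ≤ x i) ∧
        (∀ i, 0 < Δ i → 1 / (Δ i) ^ 2 ≤ ∑ j ∈ N i, x j) ∧
        c = ∑ i, x i * Δ i} =
    sInf {c : ℝ | ∃ x : Fin K → ℝ,
        (∀ i, 0 ≤ x i) ∧ x u = 0 ∧
        (∀ i, i ≠ u → 0 < Δ i → 1 / (Δ i) ^ 2 ≤ ∑ j ∈ N i, x j) ∧
        c = ∑ i, x i * Δ i} := by
  set S1 : Set ℝ := {c : ℝ | ∃ x : Fin K → ℝ,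
        (∀ i, 0 ≤ x i) ∧
        (∀ i, 0 < Δ i → 1 / (Δ i) ^ 2 ≤ ∑ j ∈ N i, x j) ∧
        c = ∑ i, x i * Δ i} with hS1
  set S2 : Set ℝ := {c : ℝ | ∃ x : Fin K → ℝ,
        (∀ i, 0 ≤ x i) ∧ x u = 0 ∧
        (∀ i, i ≠ u → 0 < Δ i → 1 / (Δ i) ^ 2 ≤ ∑ j ∈ N i, x j) ∧
        c = ∑ i, x i * Δ i} with hS2
  have hvu : v ∈ N u := hN ▸ hself v
  -- membership equivalence
  have hmem : ∀ i, u ∈ N i ↔ v ∈ N i := by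
    intro i
    rw [hsymm u i, hN, ← hsymm v i]
  -- lower bounds
  have hbdd1 : BddBelow S1 := by
    refine ⟨0, ?_⟩
    rintro c ⟨x, hx, _, rfl⟩
    exact Finset.sum_nonneg fun i _ => mul_nonneg (hx i) (hΔ i)
  have hbdd2 : BddBelow S2 := by
    refine ⟨0, ?_⟩
    rintro c ⟨x, hx, _, _, rfl⟩
    exact Finset.sum_nonneg fun i _ => mul_nonneg (hx i) (hΔ i)
  -- S2 nonempty
  have hne2 : S2.Nonempty := by
    set M : ℝ := ∑ i, (if 0 < Δ i then 1 / (Δ i) ^ 2 else 0) with hM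
    have hMnn : ∀ i, (0:ℝ) ≤ (if 0 < Δ i then 1 / (Δ i) ^ 2 else 0) := by
      intro i; split <;> positivity
    have hMle : ∀ i, 0 < Δ i → 1 / (Δ i) ^ 2 ≤ M := by
      intro i hi
      calc 1 / (Δ i) ^ 2 = (if 0 < Δ i then 1 / (Δ i) ^ 2 else 0) := by rw [if_pos hi]
        _ ≤ M := Finset.single_le_sum (fun j _ => hMnn j) (Finset.mem_univ i)
    have hM0 : 0 ≤ M := Finset.sum_nonneg fun i _ => hMnn i
    refine ⟨_, fun j => if j = u then 0 else M, ?_, ?_, ?_, rfl⟩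
    · intro i; dsimp only; split
      · exact le_refl 0
      · exact hM0
    · simp
    · intro i hiu hi
      have hkey : (fun j => if j = u then (0:ℝ) else M) i ≤ ∑ j ∈ N i, (if j = u then (0:ℝ) else M) := by
        refine Finset.single_le_sum (f := fun j => if j = u then (0:ℝ) else M) (fun j _ => ?_) (hself i)
        split
        · exact le_refl 0
        · exact hM0
      calc 1 / (Δ i) ^ 2 ≤ M := hMle i hi
        _ = (fun j => if j = u then (0:ℝ) else M) i := (if_neg hiu).symm
        _ ≤ ∑ j ∈ N i, (if j = u then (0:ℝ) else M) := hkey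
  -- S2 ⊆ S1
  have hsub : S2 ⊆ S1 := by
    rintro c ⟨x, hx, hxu, hcons, rfl⟩
    set t : ℝ := if 0 < Δ v then 0 else 1 / (Δ u) ^ 2 with ht
    have htnn : 0 ≤ t := by rw [ht]; split <;> positivity
    set x' : Fin K → ℝ := fun j => x j + (if j = v then t else 0) with hx'
    have hx'nn : ∀ j, 0 ≤ x' j := by
      intro j; rw [hx']; dsimp only
      have : (0:ℝ) ≤ (if j = v then t else 0) := by split <;> simp [htnn]
      linarith [hx j]
    have hsum : ∀ i, ∑ j ∈ N i, x' j = (∑ j ∈ N i, x j) + (if v ∈ N i then t else 0) := by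
      intro i
      rw [hx']
      rw [Finset.sum_add_distrib, Finset.sum_ite_eq' (N i) v (fun _ => t)]
    refine ⟨x', hx'nn, ?_, ?_⟩
    · intro i hi
      by_cases hiu : i = u
      · subst hiu
        by_cases hv : 0 < Δ v
        · have h1 : 1 / (Δ v) ^ 2 ≤ ∑ j ∈ N v, x j := hcons v huv.symm hv
          have h2 : 1 / (Δ i) ^ 2 ≤ 1 / (Δ v) ^ 2 := by
            apply one_div_le_one_div_of_le (by positivity)
            exact pow_le_pow_left₀ (le_of_lt hv) hge 2
          have h3 : (∑ j ∈ N i, x j) + (if v ∈ N i then t else 0) ≥ ∑ j ∈ N i, x j := by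
            have : (0:ℝ) ≤ (if v ∈ N i then t else 0) := by split <;> simp [htnn]
            linarith
          rw [hsum i]
          calc 1 / (Δ i) ^ 2 ≤ 1 / (Δ v) ^ 2 := h2
            _ ≤ ∑ j ∈ N v, x j := h1
            _ = ∑ j ∈ N i, x j := by rw [hN]
            _ ≤ _ := h3
        · have hteq : t = 1 / (Δ i) ^ 2 := if_neg hv
          rw [hsum i, if_pos hvu, hteq]
          have : 0 ≤ ∑ j ∈ N i, x j := Finset.sum_nonneg fun j _ => hx j
          linarith
      · have h1 := hcons i hiu hi
        rw [hsum i]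
        have : (0:ℝ) ≤ (if v ∈ N i then t else 0) := by split <;> simp [htnn]
        linarith
    · have hobj : ∑ i, x' i * Δ i = (∑ i, x i * Δ i) + t * Δ v := by
        rw [hx']
        simp only [add_mul]
        rw [Finset.sum_add_distrib]
        congr 1
        simp [ite_mul, Finset.sum_ite_eq']
      have htv : t * Δ v = 0 := by
        rw [ht]; split
        · ring
        · have : Δ v = 0 := le_antisymm (not_lt.mp (by assumption)) (hΔ v)
          rw [this]; ring
      rw [hobj, htv, add_zero]
  -- sInf S1 ≤ sInf S2
  have h1 : sInf S1 ≤ sInf S2 := csInf_le_csInf hbdd1 hne2 hsub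
  -- sInf S2 ≤ sInf S1
  have h2 : sInf S2 ≤ sInf S1 := by
    have hne1 : S1.Nonempty := hsub hne2.choose_spec |> fun h => ⟨hne2.choose, h⟩
    refine le_csInf hne1 ?_
    rintro c ⟨x, hx, hcons, rfl⟩
    -- move mass from u to v
    set x' : Fin K → ℝ := fun j => if j = u then 0 else if j = v then x v + x u else x j with hx'
    have hx'nn : ∀ j, 0 ≤ x' j := by
      intro j; rw [hx']; dsimp only
      split
      · exact le_refl 0
      · split
        · linarith [hx v, hx u]
        · exact hx j
    have hdecomp : ∀ j, x' j = x j + (if j = u then -x u else 0) + (if j = v then x u else 0) := by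
      intro j; rw [hx']; dsimp only
      by_cases hju : j = u
      · subst hju; rw [if_pos rfl, if_pos rfl, if_neg huv]; ring
      · rw [if_neg hju, if_neg hju]
        by_cases hjv : j = v
        · subst hjv; rw [if_pos rfl, if_pos rfl]; ring
        · rw [if_neg hjv, if_neg hjv]; ring
    have hsum : ∀ i, ∑ j ∈ N i, x' j = ∑ j ∈ N i, x j := by
      intro i
      calc ∑ j ∈ N i, x' j
          = ∑ j ∈ N i, (x j + (if j = u then -x u else 0) + (if j = v then x u else 0)) := by
            exact Finset.sum_congr rfl fun j _ => hdecomp j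
        _ = (∑ j ∈ N i, x j) + (if u ∈ N i then -x u else 0) + (if v ∈ N i then x u else 0) := by
            rw [Finset.sum_add_distrib, Finset.sum_add_distrib,
              Finset.sum_ite_eq' (N i) u (fun _ => -x u),
              Finset.sum_ite_eq' (N i) v (fun _ => x u)]
        _ = ∑ j ∈ N i, x j := by
            by_cases h : u ∈ N i
            · rw [if_pos h, if_pos ((hmem i).mp h)]; ring
            · rw [if_neg h, if_neg (fun hv => h ((hmem i).mpr hv))]; ring
    have hobj : ∑ i, x' i * Δ i = (∑ i, x i * Δ i) - x u * Δ u + x u * Δ v := by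
      calc ∑ i, x' i * Δ i
          = ∑ i, (x i * Δ i + (if i = u then -x u else 0) * Δ i
              + (if i = v then x u else 0) * Δ i) := by
            refine Finset.sum_congr rfl fun i _ => ?_
            rw [hdecomp i]; ring
        _ = (∑ i, x i * Δ i) + (∑ i, (if i = u then -x u else 0) * Δ i)
              + (∑ i, (if i = v then x u else 0) * Δ i) := by
            rw [Finset.sum_add_distrib, Finset.sum_add_distrib]
        _ = (∑ i, x i * Δ i) + (-x u * Δ u) + (x u * Δ v) := by
            congr 1
            · congr 1
              simp [ite_mul, Finset.sum_ite_eq']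
            · simp [ite_mul, Finset.sum_ite_eq']
        _ = (∑ i, x i * Δ i) - x u * Δ u + x u * Δ v := by ring
    have hmem2 : (∑ i, x' i * Δ i) ∈ S2 := by
      refine ⟨x', hx'nn, ?_, ?_, rfl⟩
      · rw [hx']; simp
      · intro i hiu hi
        rw [hsum i]
        exact hcons i hi
    calc sInf S2 ≤ ∑ i, x' i * Δ i := csInf_le hbdd2 hmem2
      _ = (∑ i, x i * Δ i) - x u * Δ u + x u * Δ v := hobj
      _ ≤ ∑ i, x i * Δ i := by
          have := mul_le_mul_of_nonneg_left hge (hx u)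
          linarith
  linarith
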